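/- arXiv:1803.04448 — 2 statements merged into one kernel-verified Lean document; each statement's English description precedes it below -/
import Mathlib

section
/- Let C and C' be curves over a field k with a closed immersion i : C' → C. Then for every closed point x of C', one has jac(C', x) ≤ jac(C, x). -/
universe u

open scoped TensorProduct

/-- The first Fitting ideal `Fitt¹(M)` of an `R`-module `M`: for any finite presentation
`R^n → M`, it is the ideal generated by the `(n-1) × (n-1)` minors of a relation matrix
(all presentations yield the same ideal, so we take the supremum over all of them). -/
noncomputable def fittingIdealOne (R : Type*) [CommRing R] (M : Type*) [AddCommGroup M]
    [Module R M] : Ideal R :=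
  ⨆ (n : ℕ), ⨆ (π : (Fin n → R) →ₗ[R] M), ⨆ (_ : Function.Surjective π),
    Ideal.span { x : R | ∃ (v : Fin (n - 1) → Fin n → R) (c : Fin (n - 1) → Fin n),
      (∀ i, π (v i) = 0) ∧ x = Matrix.det (Matrix.of fun i j => v i (c j)) }

/-- The Jacobian number of a `k`-algebra `A` : `dim_k (A / Fitt¹(Ω¹_{A/k}))`. -/
noncomputable def jacNumber (k A : Type*) [Field k] [CommRing A] [Algebra k A] : Cardinal :=
  Module.rank k (A ⧸ fittingIdealOne A (Ω[A⁄k]))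

/-- The Jacobian number of the curve `Spec R` over `k` at a point `𝔪`, i.e. the
`k`-dimension of the stalk of `O_C / Fitt¹(Ω¹_{C/k})` at `𝔪`. -/
noncomputable def jacAt (k : Type*) {R : Type*} [Field k] [CommRing R] [Algebra k R]
    (𝔪 : Ideal R) [𝔪.IsPrime] : Cardinal :=
  jacNumber k (Localization.AtPrime 𝔪)

section Aux

variable {k : Type*} {A A' : Type u} [Field k] [CommRing A] [CommRing A']
  [Algebra k A] [Algebra k A']

/-- The Fitting ideal is mapped into the Fitting ideal under a surjective algebra map. -/
lemma fittingIdealOne_map_le (g : A →ₐ[k] A') (hg : Function.Surjective g) :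
    Ideal.map (g : A →+* A') (fittingIdealOne A (Ω[A⁄k])) ≤ fittingIdealOne A' (Ω[A'⁄k]) := by
  letI : Algebra A A' := g.toRingHom.toAlgebra
  haveI : IsScalarTower k A A' := IsScalarTower.of_algebraMap_eq fun x => (g.commutes x).symm
  have halg : ∀ a : A, algebraMap A A' a = g a := fun _ => rfl
  have hgsurj : Function.Surjective (algebraMap A A') := hg
  set φ : Ω[A⁄k] →ₗ[A] Ω[A'⁄k] := KaehlerDifferential.map k k A A' with hφdef
  have hφ : Function.Surjective φ :=
    KaehlerDifferential.map_surjective_of_surjective k k A A' hgsurj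
  rw [Ideal.map_le_iff_le_comap, fittingIdealOne]
  refine iSup_le fun n => iSup_le fun π => iSup_le fun hπ => ?_
  -- construct a presentation of `Ω[A'⁄k]` with the same number of generators
  set b : Fin n → Ω[A'⁄k] := fun i => φ (π (Pi.single i 1)) with hb
  set π' : (Fin n → A') →ₗ[A'] Ω[A'⁄k] :=
    { toFun := fun w => ∑ i, w i • b i
      map_add' := fun w₁ w₂ => by
        simp only [Pi.add_apply, add_smul, Finset.sum_add_distrib]
      map_smul' := fun c w => by
        simp only [Pi.smul_apply, smul_eq_mul, mul_smul, RingHom.id_apply, Finset.smul_sum] }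
    with hπ'def
  have key : ∀ w : Fin n → A, π' (fun i => g (w i)) = φ (π w) := by
    intro w
    have hwsum : (∑ i, w i • (Pi.single i (1 : A) : Fin n → A)) = w := by
      funext j
      simp [Pi.single_apply]
    have hw : π w = ∑ i, w i • π (Pi.single i 1) := by
      conv_lhs => rw [← hwsum]
      rw [map_sum]
      simp
    rw [hw, map_sum]
    simp only [map_smul, hπ'def, LinearMap.coe_mk, AddHom.coe_mk]
    refine Finset.sum_congr rfl fun i _ => ?_
    rw [← halg, algebraMap_smul]
  have hπ' : Function.Surjective π' := by
    intro m
    obtain ⟨u, rfl⟩ := hφ m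
    obtain ⟨w, rfl⟩ := hπ u
    exact ⟨fun i => g (w i), key w⟩
  have hle : Ideal.span { x : A' | ∃ (v : Fin (n - 1) → Fin n → A') (c : Fin (n - 1) → Fin n),
        (∀ i, π' (v i) = 0) ∧ x = Matrix.det (Matrix.of fun i j => v i (c j)) } ≤
      fittingIdealOne A' (Ω[A'⁄k]) :=
    le_iSup_of_le n (le_iSup_of_le π' (le_iSup_of_le hπ' le_rfl))
  rw [Ideal.span_le]
  rintro x ⟨v, c, hv, rfl⟩
  refine hle (Ideal.subset_span ⟨fun i j => g (v i j), c, fun i => ?_, ?_⟩)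
  · rw [key, hv i, map_zero]
  · show (g : A →+* A') _ = _
    rw [RingHom.map_det]
    rfl

/-- A surjective algebra map decreases the Jacobian number. -/
lemma jacNumber_le_of_surjective (g : A →ₐ[k] A') (hg : Function.Surjective g) :
    jacNumber k A' ≤ jacNumber k A := by
  set I := fittingIdealOne A (Ω[A⁄k]) with hI
  set I' := fittingIdealOne A' (Ω[A'⁄k]) with hI'
  have hmap : Ideal.map (g : A →+* A') I ≤ I' := fittingIdealOne_map_le g hg
  set ψ : A →ₐ[k] A' ⧸ I' := (Ideal.Quotient.mkₐ k I').comp g with hψdef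
  have hψ : ∀ a ∈ I, ψ a = 0 := by
    intro a ha
    have hga : g a ∈ I' := hmap (Ideal.mem_map_of_mem _ ha)
    simpa [hψdef, Ideal.Quotient.eq_zero_iff_mem] using hga
  set ψ' : A ⧸ I →ₐ[k] A' ⧸ I' := Ideal.Quotient.liftₐ I ψ hψ with hψ'def
  have hsurj : Function.Surjective ψ' := by
    intro y
    obtain ⟨a', rfl⟩ := Ideal.Quotient.mk_surjective (I := I') y
    obtain ⟨a, rfl⟩ := hg a'
    refine ⟨Ideal.Quotient.mk I a, ?_⟩
    simp [hψ'def, hψdef, Ideal.Quotient.liftₐ_apply]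
    rfl
  exact LinearMap.rank_le_of_surjective ψ'.toLinearMap hsurj

end Aux

/-- Let `C = Spec R` and `C' = Spec R'` be curves over a field `k` together with
a closed immersion `i : C' ↪ C` (i.e. a surjective `k`-algebra homomorphism `f : R → R'`).
For every closed point `x` of `C'` (a maximal ideal `𝔪'` of `R'`, lying over the point
`𝔪 = f⁻¹(𝔪')` of `C`), one has `jac(C', x) ≤ jac(C, x)`. -/
theorem stmt_3 (k R R' : Type u) [Field k] [CommRing R] [CommRing R']
    [Algebra k R] [Algebra k R'] [Algebra.FiniteType k R] [Algebra.FiniteType k R']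
    (hdimR : ringKrullDim R = 1) (hdimR' : ringKrullDim R' = 1)
    (f : R →ₐ[k] R') (hf : Function.Surjective f)
    (𝔪' : Ideal R') (h𝔪' : 𝔪'.IsMaximal) :
    (letI := h𝔪'.isPrime; jacAt k 𝔪') ≤
      (letI : (𝔪'.comap (f : R →+* R')).IsPrime := h𝔪'.isPrime.comap _
       jacAt k (𝔪'.comap (f : R →+* R'))) := by
  letI := h𝔪'.isPrime
  letI : (𝔪'.comap (f : R →+* R')).IsPrime := h𝔪'.isPrime.comap _
  have hg0 : Function.Surjective
      (Localization.localRingHom (𝔪'.comap (f : R →+* R')) 𝔪' (f : R →+* R') rfl) :=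
    RingHom.surjective_localRingHom_of_surjective (f : R →+* R') hf 𝔪'
  let g : Localization.AtPrime (𝔪'.comap (f : R →+* R')) →ₐ[k] Localization.AtPrime 𝔪' :=
    { Localization.localRingHom (𝔪'.comap (f : R →+* R')) 𝔪' (f : R →+* R') rfl with
      commutes' := fun c => by
        simp only [RingHom.toMonoidHom_eq_coe, OneHom.toFun_eq_coe, MonoidHom.toOneHom_coe,
          MonoidHom.coe_coe]
        rw [IsScalarTower.algebraMap_apply k R (Localization.AtPrime (𝔪'.comap (f : R →+* R'))) c,
          Localization.localRingHom_to_map,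
          show ((f : R →+* R') ((algebraMap k R) c)) = f ((algebraMap k R) c) from rfl, f.commutes,
          ← IsScalarTower.algebraMap_apply k R' (Localization.AtPrime 𝔪') c] }
  exact jacNumber_le_of_surjective g hg0
end

section
/- Let k be a field of characteristic 2, and let f ∈ k[[S,T]] be a nonzero power series with f(0,0) = 0 defining a curve singularity. Then the Jacobian number dim_k k[[S,T]]/(f_S, f_T, f) is never equal to 2: it is 0 if the linear part of f is nonzero; at least 3 if the linear part vanishes and the coefficient of ST in f is 0; and equal to 1 (f defines a node) if the linear part vanishes and the coefficient of ST is nonzero. -/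
universe u

/-- The formal partial derivative `∂f/∂X_i` of a multivariate power series. -/
noncomputable def psDeriv {k : Type u} [CommRing k] (i : Fin 2)
    (f : MvPowerSeries (Fin 2) k) : MvPowerSeries (Fin 2) k :=
  fun m => ((m i + 1 : ℕ) : k) * MvPowerSeries.coeff (m + Finsupp.single i 1) f

/-- The Jacobian number (Tjurina number) `dim_k k[[S,T]]/(f_S, f_T, f)` of a plane curve
singularity `f ∈ k[[S,T]]`. -/
noncomputable def tjurina {k : Type u} [Field k] (f : MvPowerSeries (Fin 2) k) : Cardinal :=
  Module.rank k (MvPowerSeries (Fin 2) k ⧸ Ideal.span {psDeriv 0 f, psDeriv 1 f, f})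

namespace Stmt9Aux

open MvPowerSeries Finsupp Finset

set_option linter.unusedSectionVars false

/-! ### Degrees of monomials -/

def deg (m : Fin 2 →₀ ℕ) : ℕ := m 0 + m 1

lemma deg_add (m m' : Fin 2 →₀ ℕ) : deg (m + m') = deg m + deg m' := by
  simp [deg]; ring

lemma deg_single (i : Fin 2) (n : ℕ) : deg (Finsupp.single i n) = n := by
  fin_cases i <;> simp [deg, Finsupp.single_apply]

lemma fin2_eq (m : Fin 2 →₀ ℕ) :
    m = Finsupp.single 0 (m 0) + Finsupp.single 1 (m 1) := by
  ext i; fin_cases i <;> simp [Finsupp.single_apply]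

lemma deg_le_one_cases {m : Fin 2 →₀ ℕ} (h : deg m ≤ 1) :
    m = 0 ∨ m = Finsupp.single 0 1 ∨ m = Finsupp.single 1 1 := by
  unfold deg at h
  rcases Nat.le_one_iff_eq_zero_or_eq_one.mp (le_trans (Nat.le_add_right _ _) h) with h0 | h0 <;>
  rcases Nat.le_one_iff_eq_zero_or_eq_one.mp (le_trans (Nat.le_add_left _ _) h) with h1 | h1
  · left; rw [fin2_eq m, h0, h1]; simp
  · right; right; rw [fin2_eq m, h0, h1]; simp
  · right; left; rw [fin2_eq m, h0, h1]; simp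
  · omega

/-! ### The filtration by vanishing order -/

variable {k : Type u} [Field k]

def V (k : Type u) [Field k] (n : ℕ) : Set (MvPowerSeries (Fin 2) k) :=
  {g | ∀ m : Fin 2 →₀ ℕ, deg m < n → MvPowerSeries.coeff (R := k) m g = 0}

lemma V_mul {g h : MvPowerSeries (Fin 2) k} {i j : ℕ} (hg : g ∈ V k i) (hh : h ∈ V k j) :
    g * h ∈ V k (i + j) := by
  intro m hm
  rw [MvPowerSeries.coeff_mul]
  apply Finset.sum_eq_zero
  rintro ⟨p, q⟩ hpq
  rw [Finset.HasAntidiagonal.mem_antidiagonal] at hpq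
  have hd : deg p + deg q = deg m := by rw [← deg_add, hpq]
  rcases (show deg p < i ∨ deg q < j by omega) with h' | h'
  · rw [hg p h', zero_mul]
  · rw [hh q h', mul_zero]

lemma V_add {g h : MvPowerSeries (Fin 2) k} {n : ℕ} (hg : g ∈ V k n) (hh : h ∈ V k n) :
    g + h ∈ V k n := fun m hm => by rw [map_add, hg m hm, hh m hm, add_zero]

lemma V_neg {g : MvPowerSeries (Fin 2) k} {n : ℕ} (hg : g ∈ V k n) :
    -g ∈ V k n := fun m hm => by rw [map_neg, hg m hm, neg_zero]

lemma V_top (g : MvPowerSeries (Fin 2) k) : g ∈ V k 0 := fun m hm => by omega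

/-! ### Splitting off the variables -/

noncomputable def sB (h : MvPowerSeries (Fin 2) k) : MvPowerSeries (Fin 2) k :=
  fun m => MvPowerSeries.coeff (R := k) (m + Finsupp.single 0 1) h

noncomputable def sA (h : MvPowerSeries (Fin 2) k) : MvPowerSeries (Fin 2) k :=
  fun m => if m 0 = 0 then MvPowerSeries.coeff (R := k) (m + Finsupp.single 1 1) h else 0

lemma coeff_sB (h : MvPowerSeries (Fin 2) k) (m : Fin 2 →₀ ℕ) :
    MvPowerSeries.coeff (R := k) m (sB h) = MvPowerSeries.coeff (R := k) (m + Finsupp.single 0 1) h := rfl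

lemma coeff_sA (h : MvPowerSeries (Fin 2) k) (m : Fin 2 →₀ ℕ) :
    MvPowerSeries.coeff (R := k) m (sA h)
      = if m 0 = 0 then MvPowerSeries.coeff (R := k) (m + Finsupp.single 1 1) h else 0 := rfl

lemma sB_V {h : MvPowerSeries (Fin 2) k} {n : ℕ} (hh : h ∈ V k (n + 1)) : sB h ∈ V k n := by
  intro m hm
  rw [coeff_sB]
  exact hh _ (by rw [deg_add, deg_single]; omega)

lemma sA_V {h : MvPowerSeries (Fin 2) k} {n : ℕ} (hh : h ∈ V k (n + 1)) : sA h ∈ V k n := by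
  intro m hm
  rw [coeff_sA]
  split
  · exact hh _ (by rw [deg_add, deg_single]; omega)
  · rfl

lemma split_eq (h : MvPowerSeries (Fin 2) k) (h0 : MvPowerSeries.coeff (R := k) 0 h = 0) :
    X 0 * sB h + X 1 * sA h = h := by
  ext m
  rw [map_add, X_def, X_def, coeff_monomial_mul, coeff_monomial_mul]
  by_cases hm0 : m 0 = 0
  · rw [if_neg (by rw [Finsupp.single_le_iff]; omega)]
    by_cases hm1 : m 1 = 0
    · have : m = 0 := by rw [fin2_eq m, hm0, hm1]; simp
      rw [if_neg (by rw [Finsupp.single_le_iff]; omega), this, h0]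
      simp
    · rw [if_pos (by rw [Finsupp.single_le_iff]; omega), coeff_sA]
      rw [if_pos (show (m - Finsupp.single 1 1 : Fin 2 →₀ ℕ) 0 = 0 by
        rw [Finsupp.tsub_apply]; simp [Finsupp.single_apply, hm0])]
      rw [tsub_add_cancel_of_le (by rw [Finsupp.single_le_iff]; omega)]
      ring
  · rw [if_pos (by rw [Finsupp.single_le_iff]; omega), coeff_sB]
    rw [tsub_add_cancel_of_le (by rw [Finsupp.single_le_iff]; omega)]
    have hsub0 : (m - Finsupp.single 1 1 : Fin 2 →₀ ℕ) 0 ≠ 0 := by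
      rw [Finsupp.tsub_apply]; simpa [Finsupp.single_apply] using hm0
    split
    · rw [coeff_sA, if_neg hsub0]; ring
    · ring

/-! ### The inverse function theorem style lemma -/

/-- approximation sequence -/
noncomputable def seq (a : k) (p q h0 : MvPowerSeries (Fin 2) k) : ℕ → MvPowerSeries (Fin 2) k
  | 0 => h0
  | n + 1 =>
      -((C (σ := Fin 2) (R := k) a⁻¹ * sA (seq a p q h0 n)) * p + (C (σ := Fin 2) (R := k) a⁻¹ * sB (seq a p q h0 n)) * q)

theorem mem_span_pair_of_V
    (a : k) (ha : a ≠ 0) (g1 g2 : MvPowerSeries (Fin 2) k)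
    (hp : g1 - C (σ := Fin 2) (R := k) a * X 1 ∈ V k 2) (hq : g2 - C (σ := Fin 2) (R := k) a * X 0 ∈ V k 2)
    (h0 : MvPowerSeries (Fin 2) k) (hh0 : MvPowerSeries.coeff (R := k) 0 h0 = 0) :
    h0 ∈ Ideal.span {g1, g2} := by
  set p := g1 - C (σ := Fin 2) (R := k) a * X 1 with hpdef
  set q := g2 - C (σ := Fin 2) (R := k) a * X 0 with hqdef
  set s := seq a p q h0 with hsdef
  -- the invariant
  have hV : ∀ n, s n ∈ V k (n + 1) := by
    intro n
    induction n with
    | zero =>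
        intro m hm
        have : m = 0 := by
          have hle : deg m ≤ 1 := by omega
          rcases deg_le_one_cases hle with h | h | h
          · exact h
          all_goals (exfalso; rw [h, deg_single] at hm; omega)
        rw [this]; exact hh0
    | succ n ih =>
        show -((C (σ := Fin 2) (R := k) a⁻¹ * sA (s n)) * p + (C (σ := Fin 2) (R := k) a⁻¹ * sB (s n)) * q)
            ∈ V k (n + 2)
        apply V_neg
        apply V_add
        · exact (show n + 2 = 0 + n + 2 by omega) ▸ V_mul (V_mul (V_top _) (sA_V ih)) hp
        · exact (show n + 2 = 0 + n + 2 by omega) ▸ V_mul (V_mul (V_top _) (sB_V ih)) hq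
  have hconst : ∀ n, MvPowerSeries.coeff (R := k) 0 (s n) = 0 := by
    intro n
    exact hV n 0 (by simp [deg])
  -- telescoping identity
  have hT : ∀ n, s n - s (n + 1)
      = (C (σ := Fin 2) (R := k) a⁻¹ * sA (s n)) * g1 + (C (σ := Fin 2) (R := k) a⁻¹ * sB (s n)) * g2 := by
    intro n
    have hsn : s (n + 1)
        = -((C (σ := Fin 2) (R := k) a⁻¹ * sA (s n)) * p + (C (σ := Fin 2) (R := k) a⁻¹ * sB (s n)) * q) := rfl
    have hC : C (σ := Fin 2) (R := k) a⁻¹ * C (σ := Fin 2) (R := k) a = 1 := by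
      rw [← map_mul, inv_mul_cancel₀ ha, map_one]
    have hsplit : X 0 * sB (s n) + X 1 * sA (s n) = s n := split_eq _ (hconst n)
    have hg1 : g1 = p + C (σ := Fin 2) (R := k) a * X 1 := by rw [hpdef]; ring
    have hg2 : g2 = q + C (σ := Fin 2) (R := k) a * X 0 := by rw [hqdef]; ring
    rw [hsn, hg1, hg2]
    linear_combination (-(sA (s n) * X 1 + sB (s n) * X 0)) * hC - hsplit
  -- the coefficient-wise limits
  set A : ℕ → MvPowerSeries (Fin 2) k := fun n => C (σ := Fin 2) (R := k) a⁻¹ * sA (s n) with hA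
  set B : ℕ → MvPowerSeries (Fin 2) k := fun n => C (σ := Fin 2) (R := k) a⁻¹ * sB (s n) with hB
  have hAV : ∀ n, A n ∈ V k n := by
    intro n
    have := V_mul (V_top (C (σ := Fin 2) (R := k) a⁻¹)) (sA_V (hV n))
    simpa using this
  have hBV : ∀ n, B n ∈ V k n := by
    intro n
    have := V_mul (V_top (C (σ := Fin 2) (R := k) a⁻¹)) (sB_V (hV n))
    simpa using this
  set u : MvPowerSeries (Fin 2) k :=
    fun mm => ∑ n ∈ Finset.range (deg mm + 1), MvPowerSeries.coeff (R := k) mm (A n) with hu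
  set v : MvPowerSeries (Fin 2) k :=
    fun mm => ∑ n ∈ Finset.range (deg mm + 1), MvPowerSeries.coeff (R := k) mm (B n) with hv
  have coeff_u : ∀ mm, MvPowerSeries.coeff (R := k) mm u
      = ∑ n ∈ Finset.range (deg mm + 1), MvPowerSeries.coeff (R := k) mm (A n) := fun _ => rfl
  have coeff_v : ∀ mm, MvPowerSeries.coeff (R := k) mm v
      = ∑ n ∈ Finset.range (deg mm + 1), MvPowerSeries.coeff (R := k) mm (B n) := fun _ => rfl
  have key : u * g1 + v * g2 = h0 := by
    ext m
    have hcongr : ∀ (w : ℕ → MvPowerSeries (Fin 2) k), (∀ n, w n ∈ V k n) →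
        ∀ pp : Fin 2 →₀ ℕ, deg pp ≤ deg m →
        ∑ n ∈ Finset.range (deg pp + 1), MvPowerSeries.coeff (R := k) pp (w n)
          = MvPowerSeries.coeff (R := k) pp (∑ n ∈ Finset.range (deg m + 1), w n) := by
      intro w hw pp hpp
      rw [map_sum]
      apply Finset.sum_subset (Finset.range_subset_range.mpr (by omega))
      intro n hn hnot
      simp only [Finset.mem_range] at hn hnot
      exact hw n pp (by omega)
    have hmul : ∀ (w : ℕ → MvPowerSeries (Fin 2) k), (∀ n, w n ∈ V k n) →
        ∀ (wps g : MvPowerSeries (Fin 2) k),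
        (∀ mm, MvPowerSeries.coeff (R := k) mm wps
          = ∑ n ∈ Finset.range (deg mm + 1), MvPowerSeries.coeff (R := k) mm (w n)) →
        MvPowerSeries.coeff (R := k) m (wps * g)
          = MvPowerSeries.coeff (R := k) m ((∑ n ∈ Finset.range (deg m + 1), w n) * g) := by
      intro w hw wps g hwps
      rw [MvPowerSeries.coeff_mul, MvPowerSeries.coeff_mul]
      apply Finset.sum_congr rfl
      rintro ⟨pp, qq⟩ hpq
      rw [Finset.HasAntidiagonal.mem_antidiagonal] at hpq
      have hdeg : deg pp ≤ deg m := by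
        have h' : deg pp + deg qq = deg m := by rw [← hpq, deg_add]
        omega
      rw [hwps pp, hcongr w hw pp hdeg]
    rw [map_add, hmul A hAV u g1 coeff_u, hmul B hBV v g2 coeff_v]
    have hsum : (∑ n ∈ Finset.range (deg m + 1), A n) * g1
          + (∑ n ∈ Finset.range (deg m + 1), B n) * g2
        = ∑ n ∈ Finset.range (deg m + 1), (s n - s (n + 1)) := by
      rw [Finset.sum_mul, Finset.sum_mul, ← Finset.sum_add_distrib]
      exact Finset.sum_congr rfl fun n _ => (hT n).symm
    rw [← map_add, hsum, Finset.sum_range_sub' s (deg m + 1), map_sub,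
      hV (deg m + 1) m (by omega), sub_zero]
    rfl
  exact Ideal.mem_span_pair.mpr ⟨u, v, key⟩

/-! ### Coefficients of the partial derivatives -/

lemma coeff_psDeriv (i : Fin 2) (f : MvPowerSeries (Fin 2) k) (m : Fin 2 →₀ ℕ) :
    MvPowerSeries.coeff (R := k) m (psDeriv i f)
      = ((m i + 1 : ℕ) : k) * MvPowerSeries.coeff (R := k) (m + Finsupp.single i 1) f := rfl

section Coeffs
variable [CharP k 2] (f : MvPowerSeries (Fin 2) k)
  (hlin : ∀ i : Fin 2, MvPowerSeries.coeff (R := k) (Finsupp.single i 1) f = 0)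

include hlin in
lemma coeff_zero_psDeriv0 : MvPowerSeries.coeff (R := k) 0 (psDeriv 0 f) = 0 := by
  rw [coeff_psDeriv]
  simp [hlin 0]

include hlin in
lemma coeff_zero_psDeriv1 : MvPowerSeries.coeff (R := k) 0 (psDeriv 1 f) = 0 := by
  rw [coeff_psDeriv]
  simp [hlin 1]

lemma coeff_e0_psDeriv0 :
    MvPowerSeries.coeff (R := k) (Finsupp.single 0 1) (psDeriv 0 f) = 0 := by
  rw [coeff_psDeriv]
  have h2 : ((Finsupp.single (0 : Fin 2) 1) 0 + 1 : ℕ) = 2 := by simp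
  rw [h2, CharP.cast_eq_zero k 2, zero_mul]

lemma coeff_e1_psDeriv1 :
    MvPowerSeries.coeff (R := k) (Finsupp.single 1 1) (psDeriv 1 f) = 0 := by
  rw [coeff_psDeriv]
  have h2 : ((Finsupp.single (1 : Fin 2) 1) 1 + 1 : ℕ) = 2 := by simp
  rw [h2, CharP.cast_eq_zero k 2, zero_mul]

lemma coeff_e1_psDeriv0 :
    MvPowerSeries.coeff (R := k) (Finsupp.single 1 1) (psDeriv 0 f)
      = MvPowerSeries.coeff (R := k) (Finsupp.single 0 1 + Finsupp.single 1 1) f := by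
  rw [coeff_psDeriv]
  have h1 : ((Finsupp.single (1 : Fin 2) 1) 0 + 1 : ℕ) = 1 := by simp
  rw [h1, add_comm (Finsupp.single (1 : Fin 2) 1)]
  simp

lemma coeff_e0_psDeriv1 :
    MvPowerSeries.coeff (R := k) (Finsupp.single 0 1) (psDeriv 1 f)
      = MvPowerSeries.coeff (R := k) (Finsupp.single 0 1 + Finsupp.single 1 1) f := by
  rw [coeff_psDeriv]
  have h1 : ((Finsupp.single (0 : Fin 2) 1) 1 + 1 : ℕ) = 1 := by simp
  simp

end Coeffs

-- appended to full.lean (within namespace Stmt9Aux, after end Coeffs)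
lemma zne (i : Fin 2) : (0 : Fin 2 →₀ ℕ) ≠ Finsupp.single i 1 :=
  fun h => one_ne_zero (Finsupp.single_eq_zero.mp h.symm)

lemma ne01 : (Finsupp.single (0 : Fin 2) 1 : Fin 2 →₀ ℕ) ≠ Finsupp.single 1 1 := by
  intro h
  have := congrArg (fun m : Fin 2 →₀ ℕ => m 0) h
  simp [Finsupp.single_apply] at this

lemma ne10 : (Finsupp.single (1 : Fin 2) 1 : Fin 2 →₀ ℕ) ≠ Finsupp.single 0 1 := by
  intro h
  have := congrArg (fun m : Fin 2 →₀ ℕ => m 0) h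
  simp [Finsupp.single_apply] at this

lemma coeff_X_zero' (i : Fin 2) :
    MvPowerSeries.coeff (R := k) (0 : Fin 2 →₀ ℕ) (X i : MvPowerSeries (Fin 2) k) = 0 := by
  rw [MvPowerSeries.coeff_X, if_neg (zne i)]

lemma coeff_X_self' (i : Fin 2) :
    MvPowerSeries.coeff (R := k) (Finsupp.single i 1) (X i : MvPowerSeries (Fin 2) k) = 1 := by
  rw [MvPowerSeries.coeff_X, if_pos rfl]

lemma coeff_X_ne' {m : Fin 2 →₀ ℕ} (i : Fin 2) (h : m ≠ Finsupp.single i 1) :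
    MvPowerSeries.coeff (R := k) m (X i : MvPowerSeries (Fin 2) k) = 0 := by
  rw [MvPowerSeries.coeff_X, if_neg h]

section Parts
variable {k : Type u} [Field k]
open MvPowerSeries Finsupp Finset

lemma part2 (f : MvPowerSeries (Fin 2) k)
    (hi : ∃ i : Fin 2, MvPowerSeries.coeff (R := k) (Finsupp.single i 1) f ≠ 0) :
    tjurina f = 0 := by
  obtain ⟨i, hi⟩ := hi
  have hc : MvPowerSeries.constantCoeff (σ := Fin 2) (R := k) (psDeriv i f)
      = MvPowerSeries.coeff (R := k) (Finsupp.single i 1) f := by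
    have h0 : MvPowerSeries.constantCoeff (σ := Fin 2) (R := k) (psDeriv i f)
        = MvPowerSeries.coeff (R := k) 0 (psDeriv i f) := rfl
    rw [h0, coeff_psDeriv]
    simp
  have hunit : IsUnit (psDeriv i f) := by
    rw [MvPowerSeries.isUnit_iff_constantCoeff, hc]
    exact isUnit_iff_ne_zero.mpr hi
  have hmem : psDeriv i f ∈ Ideal.span {psDeriv 0 f, psDeriv 1 f, f} := by
    apply Ideal.subset_span
    fin_cases i <;> simp
  have htop := Ideal.eq_top_of_isUnit_mem _ hmem hunit
  haveI : Subsingleton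
      (MvPowerSeries (Fin 2) k ⧸ Ideal.span {psDeriv 0 f, psDeriv 1 f, f}) :=
    Ideal.Quotient.subsingleton_iff.mpr htop
  exact rank_subsingleton' _ _

/-- the ideal of power series vanishing to order `≥ 2` -/
def lowIdeal (k : Type u) [Field k] : Ideal (MvPowerSeries (Fin 2) k) where
  carrier := {g | ∀ m : Fin 2 →₀ ℕ, deg m ≤ 1 → MvPowerSeries.coeff (R := k) m g = 0}
  add_mem' := fun hg hh m hm => by rw [map_add, hg m hm, hh m hm, add_zero]
  zero_mem' := fun m hm => by rw [map_zero]
  smul_mem' := fun c x hx m hm => by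
    rw [smul_eq_mul, MvPowerSeries.coeff_mul]
    apply Finset.sum_eq_zero
    rintro ⟨p, q⟩ hpq
    rw [Finset.HasAntidiagonal.mem_antidiagonal] at hpq
    have hd : deg p + deg q = deg m := by rw [← deg_add, hpq]
    rw [hx q (by omega), mul_zero]

lemma part3 [CharP k 2] (f : MvPowerSeries (Fin 2) k)
    (hfconst : MvPowerSeries.constantCoeff (σ := Fin 2) (R := k) f = 0)
    (hlin : ∀ i : Fin 2, MvPowerSeries.coeff (R := k) (Finsupp.single i 1) f = 0)
    (hST : MvPowerSeries.coeff (R := k) (Finsupp.single 0 1 + Finsupp.single 1 1) f = 0) :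
    3 ≤ tjurina f := by
  set J := Ideal.span {psDeriv 0 f, psDeriv 1 f, f} with hJ
  have hcoeff0 : MvPowerSeries.coeff (R := k) 0 f = 0 := hfconst
  -- all three generators lie in `lowIdeal`
  have hJle : J ≤ lowIdeal k := by
    rw [hJ, Ideal.span_le]
    rintro g (rfl | rfl | rfl)
    · intro m hm
      rcases deg_le_one_cases hm with rfl | rfl | rfl
      · exact coeff_zero_psDeriv0 f hlin
      · exact coeff_e0_psDeriv0 f
      · rw [coeff_e1_psDeriv0 f]; exact hST
    · intro m hm
      rcases deg_le_one_cases hm with rfl | rfl | rfl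
      · exact coeff_zero_psDeriv1 f hlin
      · rw [coeff_e0_psDeriv1 f]; exact hST
      · exact coeff_e1_psDeriv1 f
    · intro m hm
      rcases deg_le_one_cases hm with rfl | rfl | rfl
      · exact hcoeff0
      · exact hlin 0
      · exact hlin 1
  -- the images of 1, S, T in the quotient are linearly independent
  set w : Fin 3 → (MvPowerSeries (Fin 2) k ⧸ J) :=
    ![Ideal.Quotient.mk J 1, Ideal.Quotient.mk J (X 0), Ideal.Quotient.mk J (X 1)] with hw
  have hli : LinearIndependent k w := by
    rw [Fintype.linearIndependent_iff]
    intro g hg i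
    have hmk : ∀ (x : MvPowerSeries (Fin 2) k) (c : k),
        c • Ideal.Quotient.mk J x = Ideal.Quotient.mk J (C (σ := Fin 2) (R := k) c * x) := by
      intro x c
      rw [show (C (σ := Fin 2) (R := k) c * x) = c • x from by
        rw [Algebra.smul_def, ← MvPowerSeries.c_eq_algebraMap]]
      rw [← Ideal.Quotient.mkₐ_eq_mk k J, ← map_smul]
    set e : MvPowerSeries (Fin 2) k :=
      C (σ := Fin 2) (R := k) (g 0) * 1 + C (σ := Fin 2) (R := k) (g 1) * X 0 + C (σ := Fin 2) (R := k) (g 2) * X 1 with he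
    have hgsum : ∑ j : Fin 3, g j • w j = Ideal.Quotient.mk J e := by
      rw [Fin.sum_univ_three]
      have hw0 : w 0 = Ideal.Quotient.mk J 1 := rfl
      have hw1 : w 1 = Ideal.Quotient.mk J (X 0) := rfl
      have hw2 : w 2 = Ideal.Quotient.mk J (X 1) := rfl
      rw [hw0, hw1, hw2, hmk, hmk, hmk, ← map_add, ← map_add]
    have hmem : e ∈ J := by
      rw [← Ideal.Quotient.eq_zero_iff_mem, ← hgsum]; exact hg
    have hmem' := hJle hmem
    have hc0 : MvPowerSeries.coeff (R := k) 0 e = g 0 := by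
      rw [he, map_add, map_add, MvPowerSeries.coeff_C_mul, MvPowerSeries.coeff_C_mul,
        MvPowerSeries.coeff_C_mul, MvPowerSeries.coeff_zero_one,
        coeff_X_zero' 0, coeff_X_zero' 1]
      ring
    have hc1 : MvPowerSeries.coeff (R := k) (Finsupp.single 0 1) e = g 1 := by
      rw [he, map_add, map_add, MvPowerSeries.coeff_C_mul, MvPowerSeries.coeff_C_mul,
        MvPowerSeries.coeff_C_mul, MvPowerSeries.coeff_one, if_neg (zne 0).symm,
        coeff_X_self' 0, coeff_X_ne' 1 ne01]
      ring
    have hc2 : MvPowerSeries.coeff (R := k) (Finsupp.single 1 1) e = g 2 := by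
      rw [he, map_add, map_add, MvPowerSeries.coeff_C_mul, MvPowerSeries.coeff_C_mul,
        MvPowerSeries.coeff_C_mul, MvPowerSeries.coeff_one, if_neg (zne 1).symm,
        coeff_X_ne' 0 ne10, coeff_X_self' 1]
      ring
    have hzero0 : g 0 = 0 := by
      rw [← hc0]; exact hmem' 0 (by simp [deg])
    have hzero1 : g 1 = 0 := by
      rw [← hc1]; exact hmem' _ (by rw [deg_single])
    have hzero2 : g 2 = 0 := by
      rw [← hc2]; exact hmem' _ (by rw [deg_single])
    fin_cases i
    · exact hzero0
    · exact hzero1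
    · exact hzero2
  have hcard := hli.cardinal_lift_le_rank
  rw [Cardinal.mk_fin] at hcard
  have : (3 : Cardinal.{u}) ≤ Module.rank k (MvPowerSeries (Fin 2) k ⧸ J) := by
    simpa using hcard
  exact this

lemma part4 [CharP k 2] (f : MvPowerSeries (Fin 2) k)
    (hfconst : MvPowerSeries.constantCoeff (σ := Fin 2) (R := k) f = 0)
    (hlin : ∀ i : Fin 2, MvPowerSeries.coeff (R := k) (Finsupp.single i 1) f = 0)
    (hST : MvPowerSeries.coeff (R := k) (Finsupp.single 0 1 + Finsupp.single 1 1) f ≠ 0) :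
    tjurina f = 1 := by
  set a := MvPowerSeries.coeff (R := k) (Finsupp.single 0 1 + Finsupp.single 1 1) f with ha
  set J := Ideal.span {psDeriv 0 f, psDeriv 1 f, f} with hJ
  -- the constant coefficient algebra homomorphism
  set cAlg : MvPowerSeries (Fin 2) k →ₐ[k] k :=
    { toRingHom := MvPowerSeries.constantCoeff (σ := Fin 2) (R := k)
      commutes' := fun r => by
        simp [MvPowerSeries.algebraMap_apply, MvPowerSeries.constantCoeff_C] } with hcAlg
  have hcAlgApply : ∀ g, cAlg g = MvPowerSeries.constantCoeff (σ := Fin 2) (R := k) g := fun g => rfl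
  have hJker : J = RingHom.ker cAlg := by
    apply le_antisymm
    · rw [hJ, Ideal.span_le]
      rintro g (rfl | rfl | rfl) <;> rw [SetLike.mem_coe, RingHom.mem_ker, hcAlgApply]
      · exact coeff_zero_psDeriv0 f hlin
      · exact coeff_zero_psDeriv1 f hlin
      · exact hfconst
    · intro x hx
      rw [RingHom.mem_ker, hcAlgApply] at hx
      have hx0 : MvPowerSeries.coeff (R := k) 0 x = 0 := hx
      have hp : psDeriv 0 f - C (σ := Fin 2) (R := k) a * X 1 ∈ V k 2 := by
        intro m hm
        have hle : deg m ≤ 1 := by omega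
        rw [map_sub]
        rcases deg_le_one_cases hle with rfl | rfl | rfl
        · rw [coeff_zero_psDeriv0 f hlin, MvPowerSeries.coeff_C_mul]
          rw [coeff_X_zero' 1]
          ring
        · rw [coeff_e0_psDeriv0 f, MvPowerSeries.coeff_C_mul]
          rw [coeff_X_ne' 1 ne01]
          ring
        · rw [coeff_e1_psDeriv0 f, ← ha, MvPowerSeries.coeff_C_mul]
          rw [coeff_X_self' 1]
          ring
      have hq : psDeriv 1 f - C (σ := Fin 2) (R := k) a * X 0 ∈ V k 2 := by
        intro m hm
        have hle : deg m ≤ 1 := by omega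
        rw [map_sub]
        rcases deg_le_one_cases hle with rfl | rfl | rfl
        · rw [coeff_zero_psDeriv1 f hlin, MvPowerSeries.coeff_C_mul]
          rw [coeff_X_zero' 0]
          ring
        · rw [coeff_e0_psDeriv1 f, ← ha, MvPowerSeries.coeff_C_mul]
          rw [coeff_X_self' 0]
          ring
        · rw [coeff_e1_psDeriv1 f, MvPowerSeries.coeff_C_mul]
          rw [coeff_X_ne' 0 ne10]
          ring
      have hx2 : x ∈ Ideal.span {psDeriv 0 f, psDeriv 1 f} :=
        mem_span_pair_of_V a hST (psDeriv 0 f) (psDeriv 1 f) hp hq x hx0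
      refine Ideal.span_mono ?_ hx2
      intro y hy
      rcases hy with rfl | rfl
      · exact Set.mem_insert _ _
      · exact Set.mem_insert_of_mem _ (Set.mem_insert _ _)
  have hsurj : Function.Surjective cAlg := fun r =>
    ⟨C (σ := Fin 2) (R := k) r, MvPowerSeries.constantCoeff_C r⟩
  have hrank : tjurina f = Module.rank k (MvPowerSeries (Fin 2) k ⧸ J) := rfl
  rw [hrank, hJker]
  rw [(Ideal.quotientKerAlgEquivOfSurjective hsurj).toLinearEquiv.rank_eq]
  exact Module.rank_self k

end Parts

end Stmt9Aux

/-- Let `k` be an (algebraically closed) field of characteristic `2`, and let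
`f ∈ k[[S,T]]` be a nonzero power series with `f(0,0) = 0` defining a curve singularity.
Then the Jacobian number `dim_k k[[S,T]]/(f_S, f_T, f)` is never equal to `2`: it is `0` if
the linear part of `f` is nonzero; at least `3` if the linear part vanishes and the
coefficient of `ST` in `f` is `0`; and equal to `1` (`f` defines a node) if the linear part
vanishes and the coefficient of `ST` is nonzero. -/
theorem stmt_9 (k : Type u) [Field k] [IsAlgClosed k] [CharP k 2]
    (f : MvPowerSeries (Fin 2) k) (hf0 : f ≠ 0)
    (hfconst : MvPowerSeries.constantCoeff f = 0) :
    tjurina f ≠ 2 ∧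
    ((∃ i : Fin 2, MvPowerSeries.coeff (Finsupp.single i 1) f ≠ 0) → tjurina f = 0) ∧
    ((∀ i : Fin 2, MvPowerSeries.coeff (Finsupp.single i 1) f = 0) →
      MvPowerSeries.coeff (Finsupp.single 0 1 + Finsupp.single 1 1) f = 0 →
        3 ≤ tjurina f) ∧
    ((∀ i : Fin 2, MvPowerSeries.coeff (Finsupp.single i 1) f = 0) →
      MvPowerSeries.coeff (Finsupp.single 0 1 + Finsupp.single 1 1) f ≠ 0 →
        tjurina f = 1) := by
  refine ⟨?_, Stmt9Aux.part2 f, Stmt9Aux.part3 f hfconst, Stmt9Aux.part4 f hfconst⟩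
  by_cases hex : ∃ i : Fin 2, MvPowerSeries.coeff (R := k) (Finsupp.single i 1) f ≠ 0
  · rw [Stmt9Aux.part2 f hex]
    intro h
    exact absurd h.symm (by norm_num)
  · push_neg at hex
    by_cases hST : MvPowerSeries.coeff (R := k) (Finsupp.single 0 1 + Finsupp.single 1 1) f = 0
    · have h3 := Stmt9Aux.part3 f hfconst hex hST
      intro h
      rw [h] at h3
      have : (3 : ℕ) ≤ (2 : ℕ) := by exact_mod_cast h3
      omega
    · rw [Stmt9Aux.part4 f hfconst hex hST]
      intro h
      exact absurd h.symm (by norm_num)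
end
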